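/- Let 0 < ε ≤ 1/2 and α ∈ [0,1]. Let M'₁, M'₂ be matroids on a common finite nonempty ground set N' with weight function w : N' → ℝ, w(e) > 0 for all e, and let W_min = min_{e∈N'} w(e). For each e ∈ N' define w_s(e) = 2w(e)/(ε·W_min), let i_e be the unique integer with (1+ε)^{i_e} ≤ w_s(e) < (1+ε)^{i_e+1}, and define the rounded weight w_r(e) = ⌊(1+ε)^{i_e}⌋. If S is a common independent set of M'₁, M'₂ with ∑_{e∈S} w_r(e) ≥ α · max{∑_{e∈T} w_r(e) : T a common independent set of M'₁, M'₂}, then ∑_{e∈S} w(e) ≥ (1 − 2ε) · α · max{∑_{e∈T} w(e) : T a common independent set of M'₁, M'₂}. -/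

import Mathlib

open Finset

/-- A matroid on a finite ground set, given by its family of independent sets. -/
structure FinMatroid (α : Type*) [DecidableEq α] [Fintype α] where
  Indep : Finset α → Prop
  indep_empty : Indep ∅
  indep_subset : ∀ ⦃A B : Finset α⦄, A ⊆ B → Indep B → Indep A
  indep_exchange : ∀ ⦃A B : Finset α⦄, Indep A → Indep B → B.card < A.card →
    ∃ x ∈ A \ B, Indep (insert x B)

/-- The rank of a set `S` in a matroid: the size of a largest independent subset of `S`. -/
noncomputable def FinMatroid.rank {α : Type*} [DecidableEq α] [Fintype α]
    (M : FinMatroid α) (S : Finset α) : ℕ :=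
  sSup {n : ℕ | ∃ I ⊆ S, M.Indep I ∧ I.card = n}

/-- The rank of `S` with respect to an arbitrary independence predicate. -/
noncomputable def frank {β : Type*} (Ind : Finset β → Prop) (S : Finset β) : ℕ :=
  sSup {n : ℕ | ∃ I ⊆ S, Ind I ∧ I.card = n}

variable {α : Type*} [DecidableEq α] [Fintype α]

/-- The unfolded ground set `N = {(e,i) : e ∈ N', 1 ≤ i ≤ w e}`. -/
def unfoldGround (w : α → ℕ) : Finset (α × ℕ) :=
  Finset.univ.biUnion fun e => (Finset.Icc 1 (w e)).image fun i => (e, i)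

/-- The `i`-th layer projection `{e ∈ N' : (e,i) ∈ I}`. -/
def proj1 (I : Finset (α × ℕ)) (i : ℕ) : Finset α :=
  Finset.univ.filter fun e => (e, i) ∈ I

/-- The `i`-th reverse-layer projection `{e ∈ N' : (e, w e - i + 1) ∈ I}`. -/
def proj2 (w : α → ℕ) (I : Finset (α × ℕ)) (i : ℕ) : Finset α :=
  Finset.univ.filter fun e => i ≤ w e ∧ (e, w e - i + 1) ∈ I

/-- Independence in the unfolded matroid `M₁`. -/
def UnfoldIndep1 (M' : FinMatroid α) (w : α → ℕ) (W : ℕ) (I : Finset (α × ℕ)) : Prop :=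
  I ⊆ unfoldGround w ∧ ∀ i ∈ Finset.Icc 1 W, M'.Indep (proj1 I i)

/-- Independence in the unfolded matroid `M₂`. -/
def UnfoldIndep2 (M' : FinMatroid α) (w : α → ℕ) (W : ℕ) (I : Finset (α × ℕ)) : Prop :=
  I ⊆ unfoldGround w ∧ ∀ i ∈ Finset.Icc 1 W, M'.Indep (proj2 w I i)

/-- The unfolding `{(e,i) : e ∈ S', 1 ≤ i ≤ w e}` of a set `S' ⊆ N'`. -/
def unfoldSet (w : α → ℕ) (S' : Finset α) : Finset (α × ℕ) :=
  S'.biUnion fun e => (Finset.Icc 1 (w e)).image fun i => (e, i)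

/-- an `a`-approximate common independent set with respect to the
rounded weights `w_r e = ⌊(1+ε)^{i_e}⌋` is a `(1-2ε)·a`-approximate common
independent set with respect to the original weights. -/
theorem rounding_preserves_approx (ε a : ℝ) (hε0 : 0 < ε) (hε : ε ≤ 1/2)
    (ha0 : 0 ≤ a) (ha1 : a ≤ 1) [Nonempty α]
    (M'₁ M'₂ : FinMatroid α)
    (w : α → ℝ) (hw : ∀ e : α, 0 < w e)
    (Wmin : ℝ) (hWmin_le : ∀ e : α, Wmin ≤ w e) (hWmin_mem : ∃ e : α, w e = Wmin)
    (idx : α → ℤ)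
    (hidx : ∀ e : α, (1 + ε) ^ (idx e) ≤ 2 * w e / (ε * Wmin) ∧
      2 * w e / (ε * Wmin) < (1 + ε) ^ (idx e + 1))
    (S : Finset α) (hS1 : M'₁.Indep S) (hS2 : M'₂.Indep S)
    (hSapx : ∀ T : Finset α, M'₁.Indep T → M'₂.Indep T →
      a * ∑ e ∈ T, (⌊(1 + ε) ^ (idx e)⌋ : ℝ) ≤ ∑ e ∈ S, (⌊(1 + ε) ^ (idx e)⌋ : ℝ)) :
    ∀ T : Finset α, M'₁.Indep T → M'₂.Indep T →
      (1 - 2 * ε) * a * ∑ e ∈ T, w e ≤ ∑ e ∈ S, w e := by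
  intro T hT1 hT2
  obtain ⟨e0, he0⟩ := hWmin_mem
  have hWmin_pos : 0 < Wmin := he0 ▸ hw e0
  have hc : 0 < ε * Wmin := mul_pos hε0 hWmin_pos
  have hε1 : (0:ℝ) < 1 + ε := by linarith
  set ws : α → ℝ := fun e => 2 * w e / (ε * Wmin) with hws
  have hws_nonneg : ∀ e, 0 ≤ ws e := fun e => by
    have := (hw e).le; positivity
  have hws_ge : ∀ e, 2 / ε ≤ ws e := by
    intro e
    rw [hws]
    rw [div_le_div_iff₀ hε0 hc]
    have := hWmin_le e
    nlinarith
  have hA : ∀ e, (⌊(1 + ε) ^ (idx e)⌋ : ℝ) ≤ ws e := fun e =>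
    (Int.floor_le _).trans (hidx e).1
  have hB : ∀ e, ws e / (1 + ε) - 1 ≤ (⌊(1 + ε) ^ (idx e)⌋ : ℝ) := by
    intro e
    have h2 := (hidx e).2
    have hle : ws e / (1 + ε) ≤ (1 + ε) ^ (idx e) := by
      rw [div_le_iff₀ hε1]
      calc ws e ≤ (1 + ε) ^ (idx e + 1) := le_of_lt h2
        _ = (1 + ε) ^ (idx e) * (1 + ε) := by rw [zpow_add_one₀ (ne_of_gt hε1)]
    have hf : (1 + ε) ^ (idx e) - 1 < (⌊(1 + ε) ^ (idx e)⌋ : ℝ) :=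
      Int.sub_one_lt_floor _
    linarith
  have hS_ws : ∑ e ∈ S, (⌊(1 + ε) ^ (idx e)⌋ : ℝ) ≤ ∑ e ∈ S, ws e :=
    Finset.sum_le_sum fun e _ => hA e
  have hT_low : ∑ e ∈ T, (ws e / (1 + ε) - ε / 2 * ws e) ≤
      ∑ e ∈ T, (⌊(1 + ε) ^ (idx e)⌋ : ℝ) := by
    apply Finset.sum_le_sum
    intro e _
    have h2 : 2 ≤ ws e * ε := (div_le_iff₀ hε0).mp (hws_ge e)
    have h1 : 1 ≤ ε / 2 * ws e := by linarith
    linarith [hB e]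
  have hsplit : ∑ e ∈ T, (ws e / (1 + ε) - ε / 2 * ws e) =
      (1 / (1 + ε) - ε / 2) * ∑ e ∈ T, ws e := by
    rw [Finset.mul_sum]
    apply Finset.sum_congr rfl
    intro e _
    field_simp
  have hTnn : 0 ≤ ∑ e ∈ T, ws e := Finset.sum_nonneg fun e _ => hws_nonneg e
  have hcoef : 1 - 2 * ε ≤ 1 / (1 + ε) - ε / 2 := by
    have h1 : (1 - 3 / 2 * ε) * (1 + ε) ≤ 1 := by nlinarith
    have h2 : 1 - 3 / 2 * ε ≤ 1 / (1 + ε) := (le_div_iff₀ hε1).mpr h1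
    linarith
  have key : (1 - 2 * ε) * a * ∑ e ∈ T, ws e ≤ ∑ e ∈ S, ws e := by
    have step1 : (1 - 2 * ε) * a * ∑ e ∈ T, ws e ≤
        a * ((1 / (1 + ε) - ε / 2) * ∑ e ∈ T, ws e) := by
      have := mul_le_mul_of_nonneg_right hcoef (mul_nonneg ha0 hTnn)
      nlinarith
    have step2 : a * ((1 / (1 + ε) - ε / 2) * ∑ e ∈ T, ws e) ≤
        a * ∑ e ∈ T, (⌊(1 + ε) ^ (idx e)⌋ : ℝ) := by
      rw [← hsplit]
      exact mul_le_mul_of_nonneg_left hT_low ha0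
    linarith [hSapx T hT1 hT2]
  have hsum : ∀ U : Finset α, ∑ e ∈ U, ws e = 2 / (ε * Wmin) * ∑ e ∈ U, w e := by
    intro U
    rw [Finset.mul_sum]
    apply Finset.sum_congr rfl
    intro e _
    rw [hws]
    ring
  rw [hsum T, hsum S] at key
  have kpos : (0:ℝ) < 2 / (ε * Wmin) := by positivity
  refine le_of_mul_le_mul_left ?_ kpos
  calc 2 / (ε * Wmin) * ((1 - 2 * ε) * a * ∑ e ∈ T, w e)
      = (1 - 2 * ε) * a * (2 / (ε * Wmin) * ∑ e ∈ T, w e) := by ring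
    _ ≤ 2 / (ε * Wmin) * ∑ e ∈ S, w e := key
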